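/- If h satisfies h'(x) = 2c³/(κc² − h(x)²) on an interval with c ≠ 0 and κc² − h(x)² ≠ 0, then h satisfies the third-order ODE h'''·h'·h − 3(h'')²·h − h''·(h')² = 0 on that interval. -/

import Mathlib

/-- If `h' = 2c³/(κc² − h²)` on an interval, with `c ≠ 0` and
`κc² − h² ≠ 0` there, then `h''' h' h − 3 (h'')² h − h'' (h')² = 0` on that interval. -/
theorem stmt3 (h : ℝ → ℝ) (a b c κ : ℝ) (hc : c ≠ 0)
    (hne : ∀ x ∈ Set.Ioo a b, κ * c ^ 2 - (h x) ^ 2 ≠ 0)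
    (hODE : ∀ x ∈ Set.Ioo a b,
      HasDerivAt h (2 * c ^ 3 / (κ * c ^ 2 - (h x) ^ 2)) x) :
    ∀ x ∈ Set.Ioo a b,
      deriv (deriv (deriv h)) x * deriv h x * h x
        - 3 * (deriv (deriv h) x) ^ 2 * h x
        - deriv (deriv h) x * (deriv h x) ^ 2 = 0 := by
  have hso : IsOpen (Set.Ioo a b) := isOpen_Ioo
  set D : ℝ → ℝ := fun y => κ * c ^ 2 - (h y) ^ 2 with hDdef
  have hd1 : ∀ y ∈ Set.Ioo a b, deriv h y = 2 * c ^ 3 / D y :=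
    fun y hy => (hODE y hy).deriv
  have hDder : ∀ y ∈ Set.Ioo a b,
      HasDerivAt D (-(2 * h y * (2 * c ^ 3 / D y))) y := by
    intro y hy
    have h2 : HasDerivAt (fun z => (h z) ^ 2)
        ((2 : ℕ) * (h y) ^ 1 * (2 * c ^ 3 / D y)) y := (hODE y hy).pow 2
    have := (hasDerivAt_const y (κ * c ^ 2)).sub h2
    refine this.congr_deriv ?_
    push_cast; ring
  have hd2' : ∀ y ∈ Set.Ioo a b,
      HasDerivAt (deriv h) (8 * c ^ 6 * h y / (D y) ^ 3) y := by
    intro y hy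
    have hD0 := hne y hy
    have hg : HasDerivAt (fun z => 2 * c ^ 3 / D z)
        (8 * c ^ 6 * h y / (D y) ^ 3) y := by
      have := ((hDder y hy).inv hD0).const_mul (2 * c ^ 3)
      refine this.congr_deriv ?_
      have hD0' : D y ≠ 0 := hD0
      field_simp
      ring
    refine hg.congr_of_eventuallyEq ?_
    filter_upwards [hso.mem_nhds hy] with z hz
    exact hd1 z hz
  have hd2 : ∀ y ∈ Set.Ioo a b,
      deriv (deriv h) y = 8 * c ^ 6 * h y / (D y) ^ 3 :=
    fun y hy => (hd2' y hy).deriv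
  intro x hx
  have hD0 := hne x hx
  have hD3 : (D x) ^ 3 ≠ 0 := pow_ne_zero _ hD0
  have hnum : HasDerivAt (fun z => 8 * c ^ 6 * h z)
      (8 * c ^ 6 * (2 * c ^ 3 / D x)) x := (hODE x hx).const_mul _
  have hden : HasDerivAt (fun z => (D z) ^ 3)
      ((3 : ℕ) * (D x) ^ 2 * (-(2 * h x * (2 * c ^ 3 / D x)))) x :=
    (hDder x hx).pow 3
  have hφ : HasDerivAt (fun z => 8 * c ^ 6 * h z / (D z) ^ 3)
      ((8 * c ^ 6 * (2 * c ^ 3 / D x) * (D x) ^ 3 -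
        8 * c ^ 6 * h x * ((3 : ℕ) * (D x) ^ 2 * (-(2 * h x * (2 * c ^ 3 / D x))))) /
        ((D x) ^ 3) ^ 2) x := hnum.div hden hD3
  have hd3 : HasDerivAt (deriv (deriv h))
      ((8 * c ^ 6 * (2 * c ^ 3 / D x) * (D x) ^ 3 -
        8 * c ^ 6 * h x * ((3 : ℕ) * (D x) ^ 2 * (-(2 * h x * (2 * c ^ 3 / D x))))) /
        ((D x) ^ 3) ^ 2) x := by
    refine hφ.congr_of_eventuallyEq ?_
    filter_upwards [hso.mem_nhds hx] with z hz
    exact hd2 z hz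
  rw [hd3.deriv, hd2 x hx, hd1 x hx]
  field_simp
  ring
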